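/- Let {ψ_m}_{m∈ℤ²} be an orthonormal family in the range of an orthogonal projection P on L²(ℝ²), with each ψ_m satisfying ∫ ⟨x₁−m₁⟩^{2(1+δ)}|ψ_m|² dx ≤ C₀ and ∫ ⟨x₂−m₂⟩^{2(1+δ)}|ψ_m|² dx ≤ C₀, and assume {ψ_m}_{m∈ℤ²} spans Ran(P). Let P_c := Σ_{|m|_∞ ≤ c} |ψ_m⟩⟨ψ_m|. Then for all a, b ≥ 1, ‖χ_a (P − P_{a+b})‖²_{HS} ≤ C (b^{−δ} + a b^{−(1+δ)}) for a constant C depending only on C₀ and δ. -/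

import Mathlib

open MeasureTheory Real

noncomputable section

abbrev Plane := EuclideanSpace ℝ (Fin 2)
abbrev H2 := Lp ℂ 2 (volume : Measure Plane)

/-- The square `[-c, c)²` in the plane. -/
def box (c : ℝ) : Set Plane := {x | x 0 ∈ Set.Ico (-c) c ∧ x 1 ∈ Set.Ico (-c) c}

/-- Japanese bracket of a real number. -/
def jb (t : ℝ) : ℝ := Real.sqrt (t ^ 2 + 1)

lemma box_measurable (a : ℝ) : MeasurableSet (box a) := by
  have h0 : Measurable fun x : Plane => x 0 :=
    (EuclideanSpace.proj (0 : Fin 2) (𝕜 := ℝ)).continuous.measurable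
  have h1 : Measurable fun x : Plane => x 1 :=
    (EuclideanSpace.proj (1 : Fin 2) (𝕜 := ℝ)).continuous.measurable
  exact (h0 measurableSet_Ico).inter (h1 measurableSet_Ico)

lemma abs_le_jb (t : ℝ) : |t| ≤ jb t := by
  rw [jb, ← Real.sqrt_sq_eq_abs]
  exact Real.sqrt_le_sqrt (by nlinarith)

lemma key (δ C₀ a b c : ℝ) (hδ : 0 < δ) (hb : 1 ≤ b)
    (h : a + b < |c|) (f : Plane → ℂ) (i : Fin 2)
    (hxa : ∀ x ∈ box a, |x i| ≤ a)
    (hmom : ∫⁻ x, ENNReal.ofReal ((jb (x i - c)) ^ (2 * (1 + δ)) * ‖f x‖ ^ 2) ≤ ENNReal.ofReal C₀) :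
    ∫⁻ x in box a, ENNReal.ofReal (‖f x‖ ^ 2)
      ≤ ENNReal.ofReal C₀ * ENNReal.ofReal ((|c| - a) ^ (-(2 * (1 + δ)))) := by
  set s : ℝ := 2 * (1 + δ) with hs_def
  have hs : 0 ≤ s := by positivity
  set t : ℝ := |c| - a with ht_def
  have ht0 : 0 < t := by simp only [ht_def]; linarith
  have hts : 0 < t ^ s := Real.rpow_pos_of_pos ht0 s
  have hK0 : ENNReal.ofReal (t ^ s) ≠ 0 := by
    simp [ENNReal.ofReal_eq_zero, not_le, hts]
  have hKt : ENNReal.ofReal (t ^ s) ≠ ⊤ := ENNReal.ofReal_ne_top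
  have main : ENNReal.ofReal (t ^ s) * ∫⁻ x in box a, ENNReal.ofReal (‖f x‖ ^ 2)
      ≤ ENNReal.ofReal C₀ := by
    calc ENNReal.ofReal (t ^ s) * ∫⁻ x in box a, ENNReal.ofReal (‖f x‖ ^ 2)
        = ∫⁻ x in box a, ENNReal.ofReal (t ^ s) * ENNReal.ofReal (‖f x‖ ^ 2) :=
          (lintegral_const_mul' _ _ hKt).symm
      _ = ∫⁻ x in box a, ENNReal.ofReal (t ^ s * ‖f x‖ ^ 2) := by
          simp_rw [← ENNReal.ofReal_mul hts.le]
      _ ≤ ∫⁻ x in box a, ENNReal.ofReal ((jb (x i - c)) ^ s * ‖f x‖ ^ 2) := by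
          refine lintegral_mono_ae ((ae_restrict_iff' (box_measurable a)).2 (ae_of_all _ ?_))
          intro x hx
          refine ENNReal.ofReal_le_ofReal (mul_le_mul_of_nonneg_right ?_ (by positivity))
          refine Real.rpow_le_rpow ht0.le ?_ hs
          calc t = |c| - a := rfl
            _ ≤ |c| - |x i| := by linarith [hxa x hx]
            _ ≤ |c - x i| := abs_sub_abs_le_abs_sub c (x i)
            _ = |x i - c| := abs_sub_comm c (x i)
            _ ≤ jb (x i - c) := abs_le_jb _
      _ ≤ ∫⁻ x, ENNReal.ofReal ((jb (x i - c)) ^ s * ‖f x‖ ^ 2) :=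
          setLIntegral_le_lintegral _ _
      _ ≤ ENNReal.ofReal C₀ := hmom
  have h2 : ∫⁻ x in box a, ENNReal.ofReal (‖f x‖ ^ 2)
      ≤ ENNReal.ofReal C₀ / ENNReal.ofReal (t ^ s) :=
    (ENNReal.le_div_iff_mul_le (Or.inl hK0) (Or.inl hKt)).2 (by rwa [mul_comm] at main)
  calc ∫⁻ x in box a, ENNReal.ofReal (‖f x‖ ^ 2)
      ≤ ENNReal.ofReal C₀ / ENNReal.ofReal (t ^ s) := h2
    _ = ENNReal.ofReal C₀ * ENNReal.ofReal (t ^ (-s)) := by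
        rw [div_eq_mul_inv, ← ENNReal.ofReal_inv_of_pos hts, ← Real.rpow_neg ht0.le]

lemma ind_sum (k : ℤ) :
    (∑' j : ℤ, if |(j : ℝ)| ≤ |(k : ℝ)| then (1 : ENNReal) else 0)
      ≤ ((2 * k.natAbs + 1 : ℕ) : ENNReal) := by
  have hz : ∀ j ∉ Finset.Icc (-|k|) |k|,
      (if |(j : ℝ)| ≤ |(k : ℝ)| then (1 : ENNReal) else 0) = 0 := by
    intro j hj
    simp only [Finset.mem_Icc, not_and_or, not_le] at hj
    have hlt : |k| < |j| := by
      simp only [Int.abs_eq_natAbs] at hj ⊢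
      omega
    exact if_neg (not_le.mpr (by exact_mod_cast hlt))
  rw [tsum_eq_sum hz]
  calc ∑ j ∈ Finset.Icc (-|k|) |k|, (if |(j : ℝ)| ≤ |(k : ℝ)| then (1 : ENNReal) else 0)
      ≤ ∑ j ∈ Finset.Icc (-|k|) |k|, 1 := Finset.sum_le_sum (fun j _ => by split <;> simp)
    _ = ((Finset.Icc (-|k|) |k|).card : ENNReal) := by simp
    _ = ((2 * k.natAbs + 1 : ℕ) : ENNReal) := by
        norm_cast
        rw [Int.card_Icc, Int.abs_eq_natAbs]
        omega

lemma tail_sum (δ a b : ℝ) (hδ : 0 < δ) (hb : 1 ≤ b) :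
    (∑' n : ℕ, if a + b < (n : ℝ) then ENNReal.ofReal (((n : ℝ) - a) ^ (-(1 + δ))) else 0)
      ≤ ENNReal.ofReal (∑' j : ℕ, ((j : ℝ) + 1) ^ (-(1 + δ))) := by
  have hsum : Summable (fun j : ℕ => ((j : ℝ) + 1) ^ (-(1 + δ))) := by
    have h1 := (Real.summable_nat_rpow (p := -(1 + δ))).2 (by linarith)
    have h2 := (summable_nat_add_iff (f := fun n : ℕ => (n : ℝ) ^ (-(1 + δ))) 1).2 h1
    refine h2.congr fun j => by push_cast; ring_nf
  have hzero : ∀ n ∈ Finset.range ⌈a + b⌉₊,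
      (if a + b < (n : ℝ) then ENNReal.ofReal (((n : ℝ) - a) ^ (-(1 + δ))) else 0) = 0 := by
    intro n hn
    rw [Finset.mem_range] at hn
    exact if_neg (by push_neg; exact le_of_lt (Nat.lt_ceil.mp hn))
  have hsplit := Summable.sum_add_tsum_nat_add' (f := fun n : ℕ =>
      if a + b < (n : ℝ) then ENNReal.ofReal (((n : ℝ) - a) ^ (-(1 + δ))) else 0)
      (k := ⌈a + b⌉₊) (h := ENNReal.summable)
  rw [← hsplit, Finset.sum_eq_zero hzero, zero_add,
    ENNReal.ofReal_tsum_of_nonneg (fun j => Real.rpow_nonneg (by positivity) _) hsum]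
  refine ENNReal.tsum_le_tsum fun j => ?_
  split
  · next hc =>
    refine ENNReal.ofReal_le_ofReal ?_
    have hceil := Nat.le_ceil (a + b)
    have h1 : (1 : ℝ) + j ≤ ((j + ⌈a + b⌉₊ : ℕ) : ℝ) - a := by
      push_cast
      linarith
    refine Real.rpow_le_rpow_of_nonpos (by linarith) (by linarith) (by linarith)
  · positivity

lemma per_n (δ a b t : ℝ) (hδ : 0 < δ) (ha : 1 ≤ a) (hb : 1 ≤ b) (ht : b < t) (n : ℝ)
    (hn : n = t + a) :
    (2 * n + 1) * t ^ (-(2 * (1 + δ)))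
      ≤ (2 * b ^ (-δ) + 3 * a * b ^ (-(1 + δ))) * t ^ (-(1 + δ)) := by
  have hb0 : 0 < b := by linarith
  have ht0 : 0 < t := by linarith
  have e1 : t ^ (-(2 * (1 + δ))) = t ^ (-(1 + δ)) * t ^ (-(1 + δ)) := by
    rw [← Real.rpow_add ht0]; ring_nf
  have e2 : t * t ^ (-(1 + δ)) = t ^ (-δ) := by
    nth_rewrite 1 [← Real.rpow_one t]
    rw [← Real.rpow_add ht0]; ring_nf
  have a1 : t ^ (-δ) ≤ b ^ (-δ) :=
    Real.rpow_le_rpow_of_nonpos hb0 ht.le (by linarith)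
  have a2 : t ^ (-(1 + δ)) ≤ b ^ (-(1 + δ)) :=
    Real.rpow_le_rpow_of_nonpos hb0 ht.le (by linarith)
  have p1 : 0 < t ^ (-(1 + δ)) := Real.rpow_pos_of_pos ht0 _
  have key : (2 * n + 1) * t ^ (-(2 * (1 + δ)))
      = 2 * (t ^ (-δ)) * t ^ (-(1 + δ)) + (2 * a + 1) * t ^ (-(1 + δ)) * t ^ (-(1 + δ)) := by
    rw [e1, ← e2, hn]; ring
  rw [key]
  have h5 : (2 * a + 1) * t ^ (-(1 + δ)) ≤ 3 * a * b ^ (-(1 + δ)) := by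
    have h6 := mul_le_mul_of_nonneg_left a2 (show (0:ℝ) ≤ 3 * a by linarith)
    nlinarith [p1.le]
  have h3 := mul_le_mul_of_nonneg_right h5 p1.le
  have h4 := mul_le_mul_of_nonneg_right a1 p1.le
  nlinarith [h3, h4]

def gfun (δ C₀ a b : ℝ) (k : ℤ) : ENNReal :=
  if a + b < |(k : ℝ)| then
    ENNReal.ofReal C₀ * ENNReal.ofReal ((|(k : ℝ)| - a) ^ (-(2 * (1 + δ)))) else 0

def phif (δ C₀ a b : ℝ) (n : ℕ) : ENNReal :=
  if a + b < (n : ℝ) then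
    ENNReal.ofReal C₀ * ENNReal.ofReal (((n : ℝ) - a) ^ (-(2 * (1 + δ))))
      * ((2 * n + 1 : ℕ) : ENNReal) else 0

def F1 (δ C₀ a b : ℝ) (m : ℤ × ℤ) : ENNReal :=
  gfun δ C₀ a b m.1 * (if |(m.2 : ℝ)| ≤ |(m.1 : ℝ)| then 1 else 0)

def F2 (δ C₀ a b : ℝ) (m : ℤ × ℤ) : ENNReal :=
  gfun δ C₀ a b m.2 * (if |(m.1 : ℝ)| ≤ |(m.2 : ℝ)| then 1 else 0)

/-- far estimate.  For a (1+δ)-localized orthonormal basis {ψ_m}_{m∈ℤ²}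
of the range of an orthogonal projection P, and P_c the sub-projection onto the ψ_m
with |m|_∞ ≤ c, for all a, b ≥ 1:
‖χ_a (P − P_{a+b})‖²_{HS} = Σ_{|m|_∞ > a+b} ‖χ_a ψ_m‖² ≤ C (b^{−δ} + a b^{−(1+δ)}). -/
theorem stmt8 (δ C₀ : ℝ) (hδ : 0 < δ) :
    ∃ C : ℝ, ∀ (P : H2 →L[ℂ] H2), IsSelfAdjoint P → IsIdempotentElem P →
      ∀ (ψ : ℤ × ℤ → H2), Orthonormal ℂ ψ → (∀ m, P (ψ m) = ψ m) →
      (∀ f : H2, P f ∈ (Submodule.span ℂ (Set.range ψ)).topologicalClosure) →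
      (∀ m : ℤ × ℤ, ∫⁻ x, ENNReal.ofReal
          ((jb (x 0 - (m.1 : ℝ))) ^ (2 * (1 + δ)) * ‖(ψ m : Plane → ℂ) x‖ ^ 2)
          ≤ ENNReal.ofReal C₀) →
      (∀ m : ℤ × ℤ, ∫⁻ x, ENNReal.ofReal
          ((jb (x 1 - (m.2 : ℝ))) ^ (2 * (1 + δ)) * ‖(ψ m : Plane → ℂ) x‖ ^ 2)
          ≤ ENNReal.ofReal C₀) →
      ∀ a b : ℝ, 1 ≤ a → 1 ≤ b →
        (∑' m : ℤ × ℤ,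
            if a + b < max (|m.1| : ℝ) (|m.2| : ℝ) then
              ∫⁻ x in box a, ENNReal.ofReal (‖(ψ m : Plane → ℂ) x‖ ^ 2)
            else 0)
          ≤ ENNReal.ofReal (C * (b ^ (-δ) + a * b ^ (-(1 + δ)))) := by
  set Z : ℝ := ∑' j : ℕ, ((j : ℝ) + 1) ^ (-(1 + δ)) with hZ_def
  have hZ0 : 0 ≤ Z := tsum_nonneg fun j => Real.rpow_nonneg (by positivity) _
  refine ⟨12 * max C₀ 0 * Z, ?_⟩
  intro P _ _ ψ _ _ _ hmom1 hmom2 a b ha hb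
  have ha0 : (0:ℝ) < a := by linarith
  have hb0 : (0:ℝ) < b := by linarith
  -- step 1: termwise bound
  have hxa0 : ∀ x ∈ box a, |x (0 : Fin 2)| ≤ a := fun x hx =>
    abs_le.mpr ⟨hx.1.1, hx.1.2.le⟩
  have hxa1 : ∀ x ∈ box a, |x (1 : Fin 2)| ≤ a := fun x hx =>
    abs_le.mpr ⟨hx.2.1, hx.2.2.le⟩
  have step1 : ∀ m : ℤ × ℤ,
      (if a + b < max (|m.1| : ℝ) (|m.2| : ℝ) then
          ∫⁻ x in box a, ENNReal.ofReal (‖(ψ m : Plane → ℂ) x‖ ^ 2)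
        else 0) ≤ F1 δ C₀ a b m + F2 δ C₀ a b m := by
    intro m
    split
    · next hcond =>
      rcases le_total (|(m.2 : ℝ)|) (|(m.1 : ℝ)|) with h12 | h21
      · have hc1 : a + b < |(m.1 : ℝ)| := by
          rwa [max_eq_left h12] at hcond
        have hk := key δ C₀ a b (m.1 : ℝ) hδ hb hc1 (ψ m) 0 hxa0 (hmom1 m)
        refine le_trans ?_ le_self_add
        simp only [F1, gfun, if_pos hc1, if_pos h12, mul_one]
        exact hk
      · have hc2 : a + b < |(m.2 : ℝ)| := by
          rwa [max_eq_right h21] at hcond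
        have hk := key δ C₀ a b (m.2 : ℝ) hδ hb hc2 (ψ m) 1 hxa1 (hmom2 m)
        refine le_trans ?_ le_add_self
        simp only [F2, gfun, if_pos hc2, if_pos h21, mul_one]
        exact hk
    · exact zero_le
  -- step 2: sum over ℤ of f₁
  have step2 : (∑' m : ℤ × ℤ, F1 δ C₀ a b m) ≤ ∑' k : ℤ, phif δ C₀ a b k.natAbs := by
    rw [ENNReal.tsum_prod' (f := F1 δ C₀ a b)]
    refine ENNReal.tsum_le_tsum fun k => ?_
    simp only [F1]
    rw [ENNReal.tsum_mul_left]
    calc gfun δ C₀ a b k * ∑' j : ℤ, (if |(j : ℝ)| ≤ |(k : ℝ)| then (1:ENNReal) else 0)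
        ≤ gfun δ C₀ a b k * ((2 * k.natAbs + 1 : ℕ) : ENNReal) := mul_le_mul_right (ind_sum k) _
      _ = phif δ C₀ a b k.natAbs := by
          simp only [gfun, phif, Nat.cast_natAbs]
          split <;> simp [*]
  have swap : (∑' m : ℤ × ℤ, F2 δ C₀ a b m) = ∑' m : ℤ × ℤ, F1 δ C₀ a b m := by
    rw [← (Equiv.prodComm ℤ ℤ).tsum_eq (F1 δ C₀ a b)]
    exact tsum_congr fun m => rfl
  -- step 3: fold ℤ to ℕ
  have step3 : (∑' k : ℤ, phif δ C₀ a b k.natAbs) ≤ 2 * ∑' n : ℕ, phif δ C₀ a b n := by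
    have hfold := tsum_nat_add_neg (f := fun k : ℤ => phif δ C₀ a b k.natAbs) ENNReal.summable
    have hsimp : ∀ n : ℕ, phif δ C₀ a b ((n:ℤ)).natAbs + phif δ C₀ a b ((-(n:ℤ))).natAbs
        = 2 * phif δ C₀ a b n := by
      intro n
      rw [Int.natAbs_neg, Int.natAbs_natCast, two_mul]
    calc (∑' k : ℤ, phif δ C₀ a b k.natAbs)
        ≤ (∑' k : ℤ, phif δ C₀ a b k.natAbs) + phif δ C₀ a b ((0:ℤ)).natAbs := le_self_add
      _ = ∑' n : ℕ, (phif δ C₀ a b ((n:ℤ)).natAbs + phif δ C₀ a b ((-(n:ℤ))).natAbs) := hfold.symm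
      _ = ∑' n : ℕ, 2 * phif δ C₀ a b n := by simp_rw [hsimp]
      _ = 2 * ∑' n : ℕ, phif δ C₀ a b n := ENNReal.tsum_mul_left
  -- step 4: tail bound
  set M : ℝ := 2 * b ^ (-δ) + 3 * a * b ^ (-(1 + δ)) with hM_def
  have hM0 : 0 ≤ M := by positivity
  have step4 : (∑' n : ℕ, phif δ C₀ a b n)
      ≤ ENNReal.ofReal C₀ * ENNReal.ofReal M * ENNReal.ofReal Z := by
    have hterm : ∀ n : ℕ, phif δ C₀ a b n ≤ ENNReal.ofReal C₀ * ENNReal.ofReal M *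
        (if a + b < (n : ℝ) then ENNReal.ofReal (((n : ℝ) - a) ^ (-(1 + δ))) else 0) := by
      intro n
      simp only [phif]
      split
      · next hc =>
        have ht : b < (n : ℝ) - a := by linarith
        have hpn := per_n δ a b ((n : ℝ) - a) hδ ha hb ht (n : ℝ) (by ring)
        have hcard : ((2 * n + 1 : ℕ) : ENNReal) = ENNReal.ofReal (2 * (n : ℝ) + 1) := by
          rw [← ENNReal.ofReal_natCast]
          norm_num
        have hrp : (0:ℝ) ≤ ((n:ℝ) - a) ^ (-(2 * (1 + δ))) :=
          Real.rpow_nonneg (by linarith) _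
        rw [hcard, mul_assoc, ← ENNReal.ofReal_mul hrp, mul_assoc, ← ENNReal.ofReal_mul hM0]
        refine mul_le_mul_right (ENNReal.ofReal_le_ofReal ?_) _
        calc ((n:ℝ) - a) ^ (-(2 * (1 + δ))) * (2 * (n:ℝ) + 1)
            = (2 * (n:ℝ) + 1) * ((n:ℝ) - a) ^ (-(2 * (1 + δ))) := by ring
          _ ≤ M * ((n:ℝ) - a) ^ (-(1 + δ)) := hpn
      · simp
    calc (∑' n : ℕ, phif δ C₀ a b n)
        ≤ ∑' n : ℕ, ENNReal.ofReal C₀ * ENNReal.ofReal M *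
            (if a + b < (n : ℝ) then ENNReal.ofReal (((n : ℝ) - a) ^ (-(1 + δ))) else 0) :=
          ENNReal.tsum_le_tsum hterm
      _ = ENNReal.ofReal C₀ * ENNReal.ofReal M *
            ∑' n : ℕ, (if a + b < (n : ℝ) then ENNReal.ofReal (((n : ℝ) - a) ^ (-(1 + δ))) else 0) :=
          ENNReal.tsum_mul_left
      _ ≤ ENNReal.ofReal C₀ * ENNReal.ofReal M * ENNReal.ofReal Z :=
          mul_le_mul_right (tail_sum δ a b hδ hb) _
  -- assemble
  calc (∑' m : ℤ × ℤ,
          if a + b < max (|m.1| : ℝ) (|m.2| : ℝ) then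
            ∫⁻ x in box a, ENNReal.ofReal (‖(ψ m : Plane → ℂ) x‖ ^ 2)
          else 0)
      ≤ ∑' m : ℤ × ℤ, (F1 δ C₀ a b m + F2 δ C₀ a b m) := ENNReal.tsum_le_tsum step1
    _ = (∑' m : ℤ × ℤ, F1 δ C₀ a b m) + (∑' m : ℤ × ℤ, F2 δ C₀ a b m) := ENNReal.tsum_add
    _ = 2 * ∑' m : ℤ × ℤ, F1 δ C₀ a b m := by rw [swap, two_mul]
    _ ≤ 2 * (2 * ∑' n : ℕ, phif δ C₀ a b n) := by
        exact mul_le_mul_right (le_trans step2 step3) _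
    _ ≤ 2 * (2 * (ENNReal.ofReal C₀ * ENNReal.ofReal M * ENNReal.ofReal Z)) := by
        exact mul_le_mul_right (mul_le_mul_right step4 _) _
    _ ≤ ENNReal.ofReal (12 * max C₀ 0 * Z * (b ^ (-δ) + a * b ^ (-(1 + δ)))) := by
        have hC0 : ENNReal.ofReal C₀ ≤ ENNReal.ofReal (max C₀ 0) :=
          ENNReal.ofReal_le_ofReal (le_max_left _ _)
        have h1 : 2 * (2 * (ENNReal.ofReal C₀ * ENNReal.ofReal M * ENNReal.ofReal Z))
            ≤ ENNReal.ofReal (4 * (max C₀ 0 * M * Z)) := by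
          rw [ENNReal.ofReal_mul (by norm_num), ENNReal.ofReal_mul (by positivity),
            ENNReal.ofReal_mul (le_max_right C₀ 0)]
          calc 2 * (2 * (ENNReal.ofReal C₀ * ENNReal.ofReal M * ENNReal.ofReal Z))
              = 4 * (ENNReal.ofReal C₀ * ENNReal.ofReal M * ENNReal.ofReal Z) := by
                rw [← mul_assoc]; norm_num
            _ ≤ 4 * (ENNReal.ofReal (max C₀ 0) * ENNReal.ofReal M * ENNReal.ofReal Z) := by
                gcongr
            _ = ENNReal.ofReal 4 * (ENNReal.ofReal (max C₀ 0) * ENNReal.ofReal M * ENNReal.ofReal Z) := by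
                norm_num
            _ = ENNReal.ofReal 4 * (ENNReal.ofReal (max C₀ 0) * ENNReal.ofReal M * ENNReal.ofReal Z) := by
                ring
        refine le_trans h1 (ENNReal.ofReal_le_ofReal ?_)
        have hMle : M ≤ 3 * (b ^ (-δ) + a * b ^ (-(1 + δ))) := by
          have h1 : 0 ≤ b ^ (-δ) := Real.rpow_nonneg hb0.le _
          simp only [hM_def]
          nlinarith
        have hmc : 0 ≤ max C₀ 0 := le_max_right _ _
        nlinarith [mul_nonneg (mul_nonneg (by positivity : (0:ℝ) ≤ 4 * max C₀ 0) hZ0)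
          (sub_nonneg.2 hMle)]
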